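/- Let K ≥ 2, σ² > 0, 0 < C_1 ≤ … ≤ C_K, D_k ∈ (0,1), P > 0, P_c > 0, and let a*_k(θ), x*_k(θ) and N(θ) := log₂(C_1·θ + σ²) + Σ_{k=1}^{K−1}[log₂(C_{k+1}·x*_k(θ) + σ²) − log₂(C_k·x*_k(θ) + σ²)] be as in Theorem 2, with a*_k(θ) = D_k·(θ − Σ_{i<k} a*_i(θ)) + D_k σ²/C_k for k < K, a*_K(θ) = θ − Σ_{i<K} a*_i(θ), x*_k(θ) = Σ_{i>k} a*_i(θ). Let I ⊆ (0, ∞) be an interval on which x*_k(θ) ≥ 0 for all k ≤ K−1, and define EE(θ) := N(θ)/(θ·P + P_c). Then EE is strictly pseudo-concave on I: EE is differentiable on the interior of I, and for all θ₁ in the interior of I and θ₂ ∈ I with θ₂ ≠ θ₁, if EE′(θ₁)·(θ₂ − θ₁) ≤ 0 then EE(θ₂) < EE(θ₁). -/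

import Mathlib

open Real Set

private lemma convexOn_congr' {I : Set ℝ} {f g : ℝ → ℝ} (hf : ConvexOn ℝ I f)
    (h : ∀ x ∈ I, f x = g x) : ConvexOn ℝ I g :=
  ⟨hf.1, fun x hx y hy a b ha hb hab => by
    rw [← h _ hx, ← h _ hy, ← h _ (hf.1 hx hy ha hb hab)]; exact hf.2 hx hy ha hb hab⟩

private lemma concaveOn_congr' {I : Set ℝ} {f g : ℝ → ℝ} (hf : ConcaveOn ℝ I f)
    (h : ∀ x ∈ I, f x = g x) : ConcaveOn ℝ I g :=
  ⟨hf.1, fun x hx y hy a b ha hb hab => by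
    rw [← h _ hx, ← h _ hy, ← h _ (hf.1 hx hy ha hb hab)]; exact hf.2 hx hy ha hb hab⟩

private lemma strictConcaveOn_congr' {I : Set ℝ} {f g : ℝ → ℝ} (hf : StrictConcaveOn ℝ I f)
    (h : ∀ x ∈ I, f x = g x) : StrictConcaveOn ℝ I g :=
  ⟨hf.1, fun x hx y hy hxy a b ha hb hab => by
    rw [← h _ hx, ← h _ hy, ← h _ (hf.1 hx hy ha.le hb.le hab)]
    exact hf.2 hx hy hxy ha hb hab⟩

private lemma concaveOn_logb_Ioi : ConcaveOn ℝ (Set.Ioi (0:ℝ)) (Real.logb 2) := by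
  have h := (strictConcaveOn_log_Ioi.concaveOn).smul
    (inv_nonneg.mpr (Real.log_nonneg one_le_two))
  refine concaveOn_congr' h (fun x _ => ?_)
  simp [Real.logb, smul_eq_mul, div_eq_inv_mul]

private lemma concaveOn_logb_comp {I : Set ℝ} {q : ℝ → ℝ} (hq : ConcaveOn ℝ I q)
    (hpos : ∀ x ∈ I, 0 < q x) : ConcaveOn ℝ I (fun x => Real.logb 2 (q x)) :=
  ⟨hq.1, fun x hx y hy a b ha hb hab => by
    have h1 : a • q x + b • q y ≤ q (a • x + b • y) := hq.2 hx hy ha hb hab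
    have hz : a • q x + b • q y ∈ Set.Ioi (0:ℝ) :=
      (convex_Ioi (0:ℝ)) (hpos x hx) (hpos y hy) ha hb hab
    calc a • Real.logb 2 (q x) + b • Real.logb 2 (q y)
        ≤ Real.logb 2 (a • q x + b • q y) :=
          concaveOn_logb_Ioi.2 (hpos x hx) (hpos y hy) ha hb hab
      _ ≤ Real.logb 2 (q (a • x + b • y)) :=
          Real.logb_le_logb_of_le one_lt_two hz h1⟩

private lemma concaveOn_finsum {I : Set ℝ} (hI : Convex ℝ I) {ι : Type*} (s : Finset ι)
    (f : ι → ℝ → ℝ) (h : ∀ i ∈ s, ConcaveOn ℝ I (f i)) :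
    ConcaveOn ℝ I (fun θ => ∑ i ∈ s, f i θ) := by
  classical
  induction s using Finset.induction_on with
  | empty => simp only [Finset.sum_empty]; exact concaveOn_const 0 hI
  | insert _ _ hni ih =>
    simp only [Finset.sum_insert hni]
    exact (h _ (Finset.mem_insert_self _ _)).add
      (ih fun i hi => h i (Finset.mem_insert_of_mem hi))

set_option maxHeartbeats 1000000 in
theorem stmt_15 (K : ℕ) (hK : 2 ≤ K) (σ2 : ℝ) (hσ : 0 < σ2)
    (C : ℕ → ℝ)
    (hCpos : ∀ k ∈ Finset.Icc 1 K, 0 < C k)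
    (hCmono : ∀ k ∈ Finset.Icc 1 (K - 1), C k ≤ C (k + 1))
    (D : ℕ → ℝ) (hD : ∀ k ∈ Finset.Icc 1 K, D k ∈ Set.Ioo (0 : ℝ) 1)
    (P Pc : ℝ) (hP : 0 < P) (hPc : 0 < Pc)
    (astar : ℝ → ℕ → ℝ)
    (hastar : ∀ θ : ℝ, ∀ k ∈ Finset.Icc 1 (K - 1),
      astar θ k = D k * (θ - ∑ i ∈ Finset.Ico 1 k, astar θ i) + D k * σ2 / C k)
    (hastarK : ∀ θ : ℝ, astar θ K = θ - ∑ i ∈ Finset.Ico 1 K, astar θ i)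
    (xstar : ℝ → ℕ → ℝ)
    (hxstar : ∀ θ k, xstar θ k = ∑ i ∈ Finset.Ioc k K, astar θ i)
    (N : ℝ → ℝ)
    (hN : ∀ θ : ℝ, N θ = Real.logb 2 (C 1 * θ + σ2) +
      ∑ k ∈ Finset.Icc 1 (K - 1),
        (Real.logb 2 (C (k + 1) * xstar θ k + σ2) -
          Real.logb 2 (C k * xstar θ k + σ2)))
    (I : Set ℝ) (hIconv : Convex ℝ I) (hIsub : I ⊆ Set.Ioi (0 : ℝ))
    (hIx : ∀ θ ∈ I, ∀ k ∈ Finset.Icc 1 (K - 1), 0 ≤ xstar θ k)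
    (EE : ℝ → ℝ) (hEE : ∀ θ : ℝ, EE θ = N θ / (θ * P + Pc)) :
    (∀ θ ∈ interior I, DifferentiableAt ℝ EE θ) ∧
    (∀ θ₁ ∈ interior I, ∀ θ₂ ∈ I, θ₂ ≠ θ₁ →
      deriv EE θ₁ * (θ₂ - θ₁) ≤ 0 → EE θ₂ < EE θ₁) := by
  classical
  have hK1 : 1 ≤ K := by omega
  -- total power identity
  have total : ∀ θ : ℝ, ∑ i ∈ Finset.Icc 1 K, astar θ i = θ := by
    intro θ
    rw [← Finset.Ico_add_one_right_eq_Icc, Finset.sum_Ico_succ_top hK1, hastarK θ]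
    ring
  -- affine structure of partial sums
  have affine : ∀ k : ℕ, k ≤ K - 1 → ∃ α β : ℝ, ∀ θ : ℝ,
      θ - ∑ i ∈ Finset.Icc 1 k, astar θ i = α * θ + β := by
    intro k
    induction k with
    | zero => exact fun _ => ⟨1, 0, fun θ => by simp⟩
    | succ n ih =>
      intro hk
      obtain ⟨α, β, hαβ⟩ := ih (by omega)
      refine ⟨(1 - D (n+1)) * α, (1 - D (n+1)) * β - D (n+1) * σ2 / C (n+1), fun θ => ?_⟩
      have hmem : n + 1 ∈ Finset.Icc 1 (K - 1) := by
        simp only [Finset.mem_Icc]; omega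
      have ha := hastar θ (n+1) hmem
      rw [Finset.Ico_add_one_right_eq_Icc] at ha
      have hS : ∑ i ∈ Finset.Icc 1 n, astar θ i = θ - (α * θ + β) := by
        have := hαβ θ; linarith
      rw [← Finset.Ico_add_one_right_eq_Icc, Finset.sum_Ico_succ_top (by omega : 1 ≤ n+1),
        Finset.Ico_add_one_right_eq_Icc, ha, hS]
      ring
  -- xstar is affine
  have xaffine : ∀ k ∈ Finset.Icc 1 (K-1), ∃ α β : ℝ, ∀ θ : ℝ, xstar θ k = α * θ + β := by
    intro k hk
    rw [Finset.mem_Icc] at hk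
    obtain ⟨α, β, h⟩ := affine k hk.2
    refine ⟨α, β, fun θ => ?_⟩
    have hsplit : ∑ i ∈ Finset.Icc 1 k, astar θ i + ∑ i ∈ Finset.Ioc k K, astar θ i = θ := by
      rw [← Finset.Ico_add_one_right_eq_Icc, ← Finset.Ico_add_one_add_one_eq_Ioc]
      rw [Finset.sum_Ico_consecutive _ (by omega : 1 ≤ k + 1) (by omega : k + 1 ≤ K + 1)]
      rw [Finset.Ico_add_one_right_eq_Icc]
      exact total θ
    rw [hxstar θ k]
    have := h θ
    linarith
  -- positivity of log arguments on I
  have hxpos : ∀ θ ∈ I, ∀ k ∈ Finset.Icc 1 (K-1),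
      0 < C k * xstar θ k + σ2 ∧ 0 < C (k+1) * xstar θ k + σ2 := by
    intro θ hθ k hk
    have hk' := Finset.mem_Icc.mp hk
    have hx := hIx θ hθ k hk
    have hC1 : 0 < C k := hCpos k (Finset.mem_Icc.mpr ⟨hk'.1, by omega⟩)
    have hC2 : 0 < C (k+1) := hCpos (k+1) (Finset.mem_Icc.mpr ⟨by omega, by omega⟩)
    constructor <;> nlinarith
  have hC1pos : 0 < C 1 := hCpos 1 (Finset.mem_Icc.mpr ⟨le_refl 1, hK1⟩)
  -- first term strictly concave
  have hfirst : StrictConcaveOn ℝ I (fun θ => Real.logb 2 (C 1 * θ + σ2)) := by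
    refine ⟨hIconv, fun x hx y hy hxy a b ha hb hab => ?_⟩
    have hxp : (0:ℝ) < x := hIsub hx
    have hyp : (0:ℝ) < y := hIsub hy
    have hu : (0:ℝ) < C 1 * x + σ2 := by nlinarith
    have hv : (0:ℝ) < C 1 * y + σ2 := by nlinarith
    have huv : C 1 * x + σ2 ≠ C 1 * y + σ2 := by
      intro h
      exact hxy (mul_left_cancel₀ (ne_of_gt hC1pos) (by linarith))
    have key := strictConcaveOn_log_Ioi.2 (Set.mem_Ioi.mpr hu) (Set.mem_Ioi.mpr hv)
      huv ha hb hab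
    have harg : a • (C 1 * x + σ2) + b • (C 1 * y + σ2) = C 1 * (a • x + b • y) + σ2 := by
      simp only [smul_eq_mul]
      linear_combination σ2 * hab
    rw [harg] at key
    have hlog2 : (0:ℝ) < Real.log 2 := Real.log_pos one_lt_two
    simp only [Real.logb, smul_eq_mul] at key ⊢
    rw [show a * (Real.log (C 1 * x + σ2) / Real.log 2) +
        b * (Real.log (C 1 * y + σ2) / Real.log 2)
        = (a * Real.log (C 1 * x + σ2) + b * Real.log (C 1 * y + σ2)) / Real.log 2 by ring]
    have key' : a * Real.log (C 1 * x + σ2) + b * Real.log (C 1 * y + σ2) <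
        Real.log (C 1 * (a • x + b • y) + σ2) := by
      simpa [smul_eq_mul] using key
    exact div_lt_div_of_pos_right key' hlog2
  -- inverse of positive affine map is convex on I
  have hinv : ∀ (c d : ℝ), (∀ θ ∈ I, 0 < c * θ + d) →
      ConvexOn ℝ I (fun θ => (c * θ + d)⁻¹) := by
    intro c d hpos
    have h0 : ConvexOn ℝ (Set.Ioi (0:ℝ)) (fun x : ℝ => x⁻¹) := by
      simpa using convexOn_zpow (𝕜 := ℝ) (-1)
    set A : ℝ →ᵃ[ℝ] ℝ := AffineMap.lineMap d (c + d) with hA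
    have hAapp : ∀ θ, A θ = c * θ + d := by
      intro θ
      simp [hA, AffineMap.lineMap_apply]
      ring
    have h1 := (h0.comp_affineMap A).subset
      (fun θ hθ => by
        simp only [Set.mem_preimage, hAapp, Set.mem_Ioi]; exact hpos θ hθ) hIconv
    exact convexOn_congr' h1 (fun θ _ => by simp [Function.comp, hAapp])
  -- each summand is concave
  have hterm : ∀ k ∈ Finset.Icc 1 (K-1), ConcaveOn ℝ I
      (fun θ => Real.logb 2 (C (k+1) * xstar θ k + σ2) -
        Real.logb 2 (C k * xstar θ k + σ2)) := by
    intro k hk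
    obtain ⟨α, β, hαβ⟩ := xaffine k hk
    have hk' := Finset.mem_Icc.mp hk
    have hC : 0 < C k := hCpos k (Finset.mem_Icc.mpr ⟨hk'.1, by omega⟩)
    have hC' : 0 < C (k+1) := hCpos (k+1) (Finset.mem_Icc.mpr ⟨by omega, by omega⟩)
    have hCC : C k ≤ C (k+1) := hCmono k hk
    have hv : ∀ θ ∈ I, 0 < (C k * α) * θ + (C k * β + σ2) := by
      intro θ hθ
      have h1 := (hxpos θ hθ k hk).1
      rw [hαβ θ] at h1
      nlinarith
    have hinvk := hinv (C k * α) (C k * β + σ2) hv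
    set B := σ2 * (C (k+1) - C k) / C k with hB
    have hBnn : 0 ≤ B := div_nonneg (mul_nonneg hσ.le (by linarith)) hC.le
    have hq : ConcaveOn ℝ I
        (fun θ => C (k+1) / C k + -(B • ((C k * α) * θ + (C k * β + σ2))⁻¹)) := by
      have h2 := (hinvk.smul hBnn).neg
      have h3 := h2.add (concaveOn_const (C (k+1) / C k) hIconv)
      exact concaveOn_congr' h3 (fun θ _ => by simp [Pi.add_apply]; ring)
    have hqpos : ∀ θ ∈ I,
        0 < C (k+1) / C k + -(B • ((C k * α) * θ + (C k * β + σ2))⁻¹) := by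
      intro θ hθ
      have h1 := (hxpos θ hθ k hk).1
      have h2 := (hxpos θ hθ k hk).2
      rw [hαβ θ] at h1 h2
      have hvθ := hv θ hθ
      have hveq : (C k * α) * θ + (C k * β + σ2) = C k * (α * θ + β) + σ2 := by ring
      rw [show (C (k+1) / C k + -(B • ((C k * α) * θ + (C k * β + σ2))⁻¹))
          = (C (k+1) * (α * θ + β) + σ2) / (C k * (α * θ + β) + σ2) by
        rw [hB, smul_eq_mul, hveq]
        field_simp
        ring]
      exact div_pos h2 h1
    have hlogq := concaveOn_logb_comp hq hqpos
    refine concaveOn_congr' hlogq (fun θ hθ => ?_)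
    have h1 := (hxpos θ hθ k hk).1
    have h2 := (hxpos θ hθ k hk).2
    have h1' := h1
    have h2' := h2
    rw [hαβ θ] at h1' h2'
    have hveq : (C k * α) * θ + (C k * β + σ2) = C k * (α * θ + β) + σ2 := by ring
    rw [show (C (k+1) / C k + -(B • ((C k * α) * θ + (C k * β + σ2))⁻¹))
        = (C (k+1) * xstar θ k + σ2) / (C k * xstar θ k + σ2) by
      rw [hB, smul_eq_mul, hveq, hαβ θ]
      field_simp
      ring]
    rw [Real.logb_div (ne_of_gt h2) (ne_of_gt h1)]
  -- N strictly concave on I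
  have hNconc : StrictConcaveOn ℝ I N := by
    have hsum := concaveOn_finsum hIconv (Finset.Icc 1 (K-1)) _ hterm
    have h := hfirst.add_concaveOn hsum
    exact strictConcaveOn_congr' h (fun θ _ => by
      rw [hN θ]; simp [Pi.add_apply])
  -- differentiability of N on interior I
  have hNdiff : ∀ θ0 ∈ interior I, DifferentiableAt ℝ N θ0 := by
    intro θ0 hθ0
    have hθ0I : θ0 ∈ I := interior_subset hθ0
    have hNfun : N = fun θ => Real.logb 2 (C 1 * θ + σ2) +
        ∑ k ∈ Finset.Icc 1 (K - 1),
          (Real.logb 2 (C (k + 1) * xstar θ k + σ2) -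
            Real.logb 2 (C k * xstar θ k + σ2)) := funext hN
    rw [hNfun]
    apply DifferentiableAt.add
    · have hθp : (0:ℝ) < θ0 := hIsub hθ0I
      have hpos : C 1 * θ0 + σ2 ≠ 0 := by positivity
      simp only [Real.logb]
      have hd1 : DifferentiableAt ℝ (fun θ : ℝ => C 1 * θ + σ2) θ0 := by fun_prop
      exact (hd1.log hpos).div_const _
    · apply DifferentiableAt.fun_sum
      intro k hk
      obtain ⟨α, β, hαβ⟩ := xaffine k hk
      have hrw : (fun θ => Real.logb 2 (C (k+1) * xstar θ k + σ2) -
          Real.logb 2 (C k * xstar θ k + σ2))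
          = fun θ => Real.log (C (k+1) * (α * θ + β) + σ2) / Real.log 2 -
            Real.log (C k * (α * θ + β) + σ2) / Real.log 2 := by
        funext θ
        rw [hαβ θ]
        simp [Real.logb]
      rw [hrw]
      have hp := hxpos θ0 hθ0I k hk
      rw [hαβ θ0] at hp
      have hd1 : DifferentiableAt ℝ (fun θ : ℝ => C (k+1) * (α * θ + β) + σ2) θ0 := by fun_prop
      have hd2 : DifferentiableAt ℝ (fun θ : ℝ => C k * (α * θ + β) + σ2) θ0 := by fun_prop
      exact ((hd1.log (ne_of_gt hp.2)).div_const _).sub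
        ((hd2.log (ne_of_gt hp.1)).div_const _)
  have hgpos : ∀ θ ∈ I, 0 < θ * P + Pc := by
    intro θ hθ
    have : (0:ℝ) < θ := hIsub hθ
    positivity
  have hgderiv : ∀ θ0 : ℝ, deriv (fun θ => θ * P + Pc) θ0 = P := by
    intro θ0
    have h := ((hasDerivAt_id θ0).mul_const P).add_const Pc
    simpa using h.deriv
  have hEEdiff : ∀ θ0 ∈ interior I, DifferentiableAt ℝ EE θ0 := by
    intro θ0 hθ0
    have hEfun : EE = fun θ => N θ / (θ * P + Pc) := funext hEE
    rw [hEfun]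
    exact (hNdiff θ0 hθ0).div (by fun_prop)
      (ne_of_gt (hgpos θ0 (interior_subset hθ0)))
  refine ⟨hEEdiff, ?_⟩
  intro θ1 hθ1 θ2 hθ2 hne hsign
  have hθ1I : θ1 ∈ I := interior_subset hθ1
  have hg1 : 0 < θ1 * P + Pc := hgpos θ1 hθ1I
  have hg2 : 0 < θ2 * P + Pc := hgpos θ2 hθ2
  set c := N θ1 / (θ1 * P + Pc) with hc
  set ψ : ℝ → ℝ := fun θ => N θ - c * (θ * P + Pc) with hψ
  clear_value c ψ
  have hψconc : StrictConcaveOn ℝ I ψ := by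
    have haff : ConcaveOn ℝ I (fun θ => -(c * (θ * P + Pc))) :=
      ⟨hIconv, fun x hx y hy a b ha hb hab => le_of_eq (by
        simp only [smul_eq_mul]
        linear_combination (-(c * Pc)) * hab)⟩
    exact strictConcaveOn_congr' (hNconc.add_concaveOn haff)
      (fun x _ => by simp only [Pi.add_apply, hψ]; ring)
  have hψdiff : DifferentiableAt ℝ ψ θ1 := by
    rw [hψ]
    exact (hNdiff θ1 hθ1).sub (by fun_prop)
  have hderivψ : deriv ψ θ1 = deriv N θ1 - c * P := by
    rw [hψ, deriv_fun_sub (hNdiff θ1 hθ1) (by fun_prop)]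
    congr 1
    rw [deriv_const_mul _ (by fun_prop : DifferentiableAt ℝ (fun θ => θ * P + Pc) θ1),
      hgderiv θ1]
  have hne1 : θ1 * P + Pc ≠ 0 := ne_of_gt hg1
  have hEEd : deriv EE θ1 * (θ1 * P + Pc) = deriv N θ1 - c * P := by
    have hEfun : EE = fun θ => N θ / (θ * P + Pc) := funext hEE
    rw [hEfun, deriv_fun_div (hNdiff θ1 hθ1) (by fun_prop) hne1, hgderiv θ1, hc]
    field_simp
  have hsignψ : deriv ψ θ1 * (θ2 - θ1) ≤ 0 := by
    have h1 : deriv ψ θ1 = deriv EE θ1 * (θ1 * P + Pc) := by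
      rw [hderivψ, hEEd]
    rw [h1]
    nlinarith [hsign, hg1]
  set m := (θ1 + θ2) / 2 with hm
  clear_value m
  have hmI : m ∈ I := by
    have h := hIconv hθ1I hθ2 (by norm_num : (0:ℝ) ≤ 1/2) (by norm_num : (0:ℝ) ≤ 1/2)
      (by norm_num)
    have : (1/2 : ℝ) • θ1 + (1/2 : ℝ) • θ2 = m := by
      simp only [smul_eq_mul, hm]; ring
    rwa [this] at h
  have hmid : (1/2 : ℝ) • ψ θ1 + (1/2 : ℝ) • ψ θ2 < ψ m := by
    have h := hψconc.2 hθ1I hθ2 (Ne.symm hne) (by norm_num : (0:ℝ) < 1/2)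
      (by norm_num : (0:ℝ) < 1/2) (by norm_num)
    have he : (1/2 : ℝ) • θ1 + (1/2 : ℝ) • θ2 = m := by
      simp only [smul_eq_mul, hm]; ring
    rwa [he] at h
  have hmne : m ≠ θ1 := by
    intro h
    apply hne
    rw [hm] at h
    linarith [h]
  have htan : ψ m ≤ ψ θ1 + deriv ψ θ1 * (m - θ1) := by
    have hccv := hψconc.concaveOn
    rcases lt_or_gt_of_ne hmne with hlt | hgt
    · -- m < θ1
      have h := hccv.deriv_le_slope hmI hθ1I hlt hψdiff
      rw [slope_def_field] at h
      have hd : (0:ℝ) < θ1 - m := by linarith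
      have := (le_div_iff₀ hd).mp h
      nlinarith
    · -- θ1 < m
      have h := hccv.slope_le_deriv hθ1I hmI hgt hψdiff
      rw [slope_def_field] at h
      have hd : (0:ℝ) < m - θ1 := by linarith
      have := (div_le_iff₀ hd).mp h
      nlinarith
  have htan2 : deriv ψ θ1 * (m - θ1) ≤ 0 := by
    have he : m - θ1 = (θ2 - θ1) / 2 := by rw [hm]; ring
    rw [he]
    linarith [hsignψ]
  have hψm : ψ m ≤ ψ θ1 := by linarith
  have hψ2 : ψ θ2 < ψ θ1 := by
    simp only [smul_eq_mul] at hmid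
    linarith
  have hψθ1 : ψ θ1 = 0 := by
    simp only [hψ]
    rw [hc, div_mul_cancel₀ _ (ne_of_gt hg1), sub_self]
  have hlt : N θ2 - c * (θ2 * P + Pc) < 0 := by
    have h2 : ψ θ2 < 0 := by rw [← hψθ1]; exact hψ2
    simp only [hψ] at h2
    exact h2
  rw [hEE θ2, hEE θ1, ← hc, div_lt_iff₀ hg2]
  linarith
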